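/- arXiv:2605.03203 — 2 statements merged into one kernel-verified Lean document; each statement's English description precedes it below -/
import Mathlib

section
/- The sequence S(N) of sliding-weighted composition sums satisfies the linear recurrence S(N) = 5·S(N-1) − 7·S(N-2) + 4·S(N-3) for all N ≥ 5. -/
/-- Sliding-product weight `∏_{i=1}^{k-1} (π_i + π_{i+1} - 1)`. -/
def slidingWeight (l : List ℕ) : ℕ :=
  ((l.zip l.tail).map fun p => p.1 + p.2 - 1).prod

/-- `S N`: the sum of the sliding weight over all compositions of `N`. -/
def S (N : ℕ) : ℕ := ∑ c : Composition N, slidingWeight c.blocks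

/-! ### An explicit enumeration of compositions -/

/-- The list of all compositions of `n` (as lists of positive parts), organized by first part. -/
def comps : ℕ → List (List ℕ)
  | 0 => [[]]
  | (n+1) => (List.finRange (n+1)).flatMap fun (j : Fin (n+1)) => (comps j).map fun l => (n + 1 - j) :: l
  decreasing_by exact j.isLt

lemma comps_zero : comps 0 = [[]] := by rw [comps]

lemma comps_succ (n : ℕ) : comps (n+1) =
    (List.finRange (n+1)).flatMap fun (j : Fin (n+1)) => (comps j).map fun l => (n + 1 - j) :: l := by
  rw [comps]

lemma mem_comps : ∀ (n : ℕ) (l : List ℕ), l ∈ comps n ↔ (l.sum = n ∧ ∀ x ∈ l, 0 < x) := by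
  intro n
  induction n using Nat.strong_induction_on with
  | _ n ih =>
    intro l
    match n with
    | 0 =>
      simp only [comps, List.mem_singleton]
      constructor
      · rintro rfl; simp
      · rintro ⟨hsum, hpos⟩
        match l with
        | [] => rfl
        | a :: t => exfalso; have := hpos a (by simp); simp at hsum; omega
    | (m+1) =>
      rw [comps]
      simp only [List.mem_flatMap, List.mem_map, List.mem_finRange, true_and]
      constructor
      · rintro ⟨j, t, ht, rfl⟩
        have h1 := (ih j j.isLt t).mp ht
        constructor
        · simp only [List.sum_cons, h1.1]; have := j.isLt; omega
        · intro x hx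
          rcases List.mem_cons.mp hx with rfl | hx
          · have := j.isLt; omega
          · exact h1.2 x hx
      · rintro ⟨hsum, hpos⟩
        match l with
        | [] => simp at hsum
        | a :: t =>
          have ha : 0 < a := hpos a (by simp)
          have hsum' : a + t.sum = m + 1 := by simpa using hsum
          have hle : t.sum < m + 1 := by omega
          refine ⟨⟨t.sum, hle⟩, t, ?_, ?_⟩
          · exact (ih t.sum hle t).mpr ⟨rfl, fun x hx => hpos x (by simp [hx])⟩
          · simp only [List.cons.injEq, and_true]; omega

lemma sum_of_mem_comps {n : ℕ} {l : List ℕ} (h : l ∈ comps n) : l.sum = n :=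
  ((mem_comps n l).mp h).1

lemma nodup_comps : ∀ n : ℕ, (comps n).Nodup := by
  intro n
  induction n using Nat.strong_induction_on with
  | _ n ih =>
    match n with
    | 0 => simp [comps]
    | (m+1) =>
      rw [comps]
      rw [List.nodup_flatMap]
      constructor
      · intro j _
        exact (ih j j.isLt).map (fun a b h => by injection h)
      · have hnd : (List.finRange (m+1)).Nodup := List.nodup_finRange _
        refine hnd.imp ?_
        intro j k hjk
        intro x hx hx'
        rcases List.mem_map.mp hx with ⟨t, ht, rfl⟩
        rcases List.mem_map.mp hx' with ⟨t', ht', he⟩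
        have e1 : t'.sum = (k : ℕ) := sum_of_mem_comps ht'
        have e2 : t.sum = (j : ℕ) := sum_of_mem_comps ht
        have : t' = t := by injection he
        subst this
        exact hjk (Fin.ext (by omega))

/-- Transfer a sum over the `Composition` fintype to a sum over the list `comps n`. -/
lemma sum_comps_eq (n : ℕ) (f : List ℕ → ℕ) :
    ∑ c : Composition n, f c.blocks = ((comps n).map f).sum := by
  have himg : (Finset.univ.image (Composition.blocks (n := n))) = (comps n).toFinset := by
    ext l
    simp only [Finset.mem_image, Finset.mem_univ, true_and, List.mem_toFinset, mem_comps]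
    constructor
    · rintro ⟨c, rfl⟩
      exact ⟨c.blocks_sum, fun x hx => c.blocks_pos hx⟩
    · rintro ⟨hsum, hpos⟩
      exact ⟨⟨l, fun {x} hx => hpos x hx, hsum⟩, rfl⟩
  rw [← List.sum_toFinset _ (nodup_comps n), ← himg,
    Finset.sum_image (fun c _ c' _ h => Composition.ext h)]

/-! ### Weighted sums and their convolution identities -/

/-- `Bz n` is `S n` as an integer, computed over `comps n`. -/
def Bz (n : ℕ) : ℤ := (((comps n).map fun l => (slidingWeight l : ℤ)).sum)

/-- `Cz n` is the sum over compositions of `n` of (first part) · weight. -/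
def Cz (n : ℕ) : ℤ :=
  (((comps n).map fun l => ((l.headI : ℤ) * slidingWeight l)).sum)

lemma sw_cons (a b : ℕ) (t : List ℕ) :
    slidingWeight (a :: b :: t) = (a + b - 1) * slidingWeight (b :: t) := by
  simp [slidingWeight]

lemma compsInnerSum (a : ℕ) (ha : 1 ≤ a) (j : ℕ) (hj : 1 ≤ j) :
    (((comps j).map fun l => (slidingWeight (a :: l) : ℤ)).sum)
      = ((a : ℤ) - 1) * Bz j + Cz j := by
  have hcong : ∀ l ∈ comps j,
      (slidingWeight (a :: l) : ℤ)
        = ((a:ℤ) - 1) * (slidingWeight l : ℤ) + (l.headI : ℤ) * (slidingWeight l : ℤ) := by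
    intro l hl
    obtain ⟨hsum, hpos⟩ := (mem_comps j l).mp hl
    match l with
    | [] => simp at hsum; omega
    | b :: t =>
      have hb : 0 < b := hpos b (by simp)
      rw [sw_cons]
      have : (a + b - 1 : ℕ) = (a - 1) + b := by omega
      rw [this]
      push_cast [Nat.cast_sub ha]
      simp only [List.headI]
      ring
  rw [List.map_congr_left hcong, List.sum_map_add, Bz, Cz, List.sum_map_mul_left]

lemma sum_flatMap' {α : Type*} (l : List α) (g : α → List ℤ) :
    (l.flatMap g).sum = (l.map fun a => (g a).sum).sum := by
  induction l <;> simp [*]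

lemma L0 (n : ℕ) :
    Bz (n+1) = 1 + ∑ i ∈ Finset.range n, (Cz (i+1) + ((n:ℤ) - 1 - i) * Bz (i+1)) := by
  rw [Bz, comps_succ, List.map_flatMap, sum_flatMap']
  rw [← Fin.sum_univ_def, Fin.sum_univ_succ]
  simp only [Fin.val_zero, Nat.sub_zero, comps_zero, List.map_map, Function.comp_def,
    Fin.val_succ]
  have h0 : (([[]] : List (List ℕ)).map fun l => (slidingWeight ((n+1) :: l) : ℤ)).sum = 1 := by
    simp [slidingWeight]
  rw [h0]
  congr 1
  rw [Fin.sum_univ_eq_sum_range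
    (fun k => ((comps (k+1)).map fun l => (slidingWeight ((n + 1 - (k+1)) :: l) : ℤ)).sum)]
  apply Finset.sum_congr rfl
  intro i hi
  have hi' : i < n := Finset.mem_range.mp hi
  rw [compsInnerSum (n + 1 - (i+1)) (by omega) (i+1) (by omega)]
  have : ((n + 1 - (i+1) : ℕ) : ℤ) = (n : ℤ) - i := by omega
  rw [this]; ring

lemma LC (n : ℕ) :
    Cz (n+1) = ((n:ℤ)+1) + ∑ i ∈ Finset.range n,
      ((n:ℤ) - i) * (Cz (i+1) + ((n:ℤ) - 1 - i) * Bz (i+1)) := by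
  rw [Cz, comps_succ, List.map_flatMap, sum_flatMap']
  rw [← Fin.sum_univ_def, Fin.sum_univ_succ]
  simp only [Fin.val_zero, Nat.sub_zero, comps_zero, List.map_map, Function.comp_def,
    Fin.val_succ]
  have h0 : (([[]] : List (List ℕ)).map fun l =>
      ((((n+1) :: l).headI : ℤ) * slidingWeight ((n+1) :: l))).sum = (n:ℤ)+1 := by
    simp [slidingWeight]
  rw [h0]
  congr 1
  rw [Fin.sum_univ_eq_sum_range (fun k => ((comps (k+1)).map fun l =>
      ((((n + 1 - (k+1)) :: l).headI : ℤ) * slidingWeight ((n + 1 - (k+1)) :: l))).sum)]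
  apply Finset.sum_congr rfl
  intro i hi
  have hi' : i < n := Finset.mem_range.mp hi
  have : ((comps (i+1)).map fun l =>
        ((((n + 1 - (i+1)) :: l).headI : ℤ) * slidingWeight ((n + 1 - (i+1)) :: l))).sum
      = ((n + 1 - (i+1) : ℕ) : ℤ) *
        ((comps (i+1)).map fun l => (slidingWeight ((n + 1 - (i+1)) :: l) : ℤ)).sum := by
    simp only [List.headI_cons]
    rw [← List.sum_map_mul_left]
  rw [this, compsInnerSum (n + 1 - (i+1)) (by omega) (i+1) (by omega)]
  have h2 : ((n + 1 - (i+1) : ℕ) : ℤ) = (n : ℤ) - i := by omega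
  rw [h2]; ring

/-! ### Elimination: deriving the linear recurrence -/

def Dz (n : ℕ) : ℤ := ∑ i ∈ Finset.range n, Bz (i+1)
def Ez (n : ℕ) : ℤ := ∑ i ∈ Finset.range n, Cz (i+1)
def Gz (n : ℕ) : ℤ := ∑ i ∈ Finset.range n, ((n:ℤ) - i) * Bz (i+1)

lemma Dz_succ (n : ℕ) : Dz (n+1) = Dz n + Bz (n+1) := Finset.sum_range_succ _ _
lemma Ez_succ (n : ℕ) : Ez (n+1) = Ez n + Cz (n+1) := Finset.sum_range_succ _ _

lemma Gz_succ (n : ℕ) : Gz (n+1) = Gz n + Dz (n+1) := by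
  rw [Gz, Gz, Finset.sum_range_succ, Dz_succ, Dz]
  have key : ∑ i ∈ Finset.range n, ((((n+1:ℕ)):ℤ) - i) * Bz (i+1)
      = ∑ i ∈ Finset.range n, (((n:ℤ) - i) * Bz (i+1) + Bz (i+1)) := by
    apply Finset.sum_congr rfl; intro i _; push_cast; ring
  rw [key, Finset.sum_add_distrib]
  have h2 : ((((n+1:ℕ)):ℤ) - n) * Bz (n+1) = Bz (n+1) := by push_cast; ring
  rw [h2]; ring

lemma L1 (n : ℕ) : Bz (n+2) = Bz (n+1) + Cz (n+1) + Dz n := by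
  have h1 := L0 (n+1)
  have h2 := L0 n
  rw [Finset.sum_range_succ] at h1
  have key : ∑ i ∈ Finset.range n, (Cz (i+1) + (((n+1:ℕ):ℤ) - 1 - i) * Bz (i+1))
      = ∑ i ∈ Finset.range n, ((Cz (i+1) + ((n:ℤ) - 1 - i) * Bz (i+1)) + Bz (i+1)) := by
    apply Finset.sum_congr rfl; intro i _; push_cast; ring
  rw [key, Finset.sum_add_distrib] at h1
  have hd : Dz n = ∑ i ∈ Finset.range n, Bz (i+1) := rfl
  have h4 : (((n+1:ℕ):ℤ) - 1 - n) * Bz (n+1) = 0 := by push_cast; ring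
  show Bz (n+1+1) = Bz (n+1) + Cz (n+1) + Dz n
  rw [hd]
  linarith [h1, h2, h4]

lemma L2a (n : ℕ) : Cz (n+2) = Cz (n+1) + 1 + Ez (n+1) + 2 * Gz n := by
  have h1 := LC (n+1)
  have h2 := LC n
  rw [Finset.sum_range_succ] at h1
  have key : ∑ i ∈ Finset.range n, ((((n+1:ℕ):ℤ) - i) * (Cz (i+1) + (((n+1:ℕ):ℤ) - 1 - i) * Bz (i+1)))
      = ∑ i ∈ Finset.range n, ((((n:ℤ) - i) * (Cz (i+1) + ((n:ℤ) - 1 - i) * Bz (i+1)))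
          + (Cz (i+1) + 2 * (((n:ℤ) - i) * Bz (i+1)))) := by
    apply Finset.sum_congr rfl; intro i _; push_cast; ring
  rw [key, Finset.sum_add_distrib, Finset.sum_add_distrib, ← Finset.mul_sum] at h1
  have hE : Ez n = ∑ i ∈ Finset.range n, Cz (i+1) := rfl
  have hG : Gz n = ∑ i ∈ Finset.range n, ((n:ℤ) - i) * Bz (i+1) := rfl
  have h4 : (((n+1:ℕ):ℤ) - n) * (Cz (n+1) + (((n+1:ℕ):ℤ) - 1 - n) * Bz (n+1)) = Cz (n+1) := by
    push_cast; ring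
  show Cz (n+1+1) = Cz (n+1) + 1 + Ez (n+1) + 2 * Gz n
  rw [Ez_succ, Ez, Gz]
  have h5 : ((((n+1:ℕ)):ℤ) + 1) = (n:ℤ) + 2 := by push_cast; ring
  linarith [h1, h2, h4]

lemma L2 (n : ℕ) : Cz (n+3) = 3 * Cz (n+2) - Cz (n+1) + 2 * Dz (n+1) := by
  have h1 : Cz (n+3) = Cz (n+2) + 1 + Ez (n+2) + 2 * Gz (n+1) := L2a (n+1)
  have h2 := L2a n
  have h3 := Ez_succ (n+1)
  have h4 := Gz_succ n
  linarith

lemma M (n : ℕ) : Bz (n+4) = 4 * Bz (n+3) - 3 * Bz (n+2) + Bz (n+1) + Dz n := by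
  have h1 : Bz (n+4) = Bz (n+3) + Cz (n+3) + Dz (n+2) := L1 (n+2)
  have h2 : Bz (n+3) = Bz (n+2) + Cz (n+2) + Dz (n+1) := L1 (n+1)
  have h3 : Bz (n+2) = Bz (n+1) + Cz (n+1) + Dz n := L1 n
  have h4 := L2 n
  have h5 := Dz_succ (n+1)
  have h6 := Dz_succ n
  linarith

lemma Bz_rec (n : ℕ) : Bz (n+5) = 5 * Bz (n+4) - 7 * Bz (n+3) + 4 * Bz (n+2) := by
  have h1 : Bz (n+5) = 4 * Bz (n+4) - 3 * Bz (n+3) + Bz (n+2) + Dz (n+1) := M (n+1)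
  have h2 := M n
  have h3 := Dz_succ n
  linarith

lemma S_eq_Bz (m : ℕ) : (S m : ℤ) = Bz m := by
  rw [S, sum_comps_eq, Bz]
  push_cast [List.map_map]
  rfl

/-- The sequence `S` satisfies `S(N) = 5·S(N-1) − 7·S(N-2) + 4·S(N-3)` for `N ≥ 5`. -/
theorem S_linear_recurrence (N : ℕ) (hN : 5 ≤ N) :
    (S N : ℤ) = 5 * S (N - 1) - 7 * S (N - 2) + 4 * S (N - 3) := by
  obtain ⟨n, rfl⟩ := Nat.exists_eq_add_of_le' hN
  have e1 : n + 5 - 1 = n + 4 := by omega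
  have e2 : n + 5 - 2 = n + 3 := by omega
  have e3 : n + 5 - 3 = n + 2 := by omega
  rw [e1, e2, e3, S_eq_Bz, S_eq_Bz, S_eq_Bz, S_eq_Bz]
  exact Bz_rec n
end

section
/- As formal power series, ∑_{N≥1} S(N) x^N = x(1−x)^3 / (1 − 5x + 7x^2 − 4x^3), where S(N) is the sliding-weighted sum over compositions of N. -/
open PowerSeries

open Finset

def compNil : Composition 0 := ⟨[], by simp, rfl⟩

lemma comp_blocks_nil (c : Composition 0) : c.blocks = [] := by
  have hs := c.blocks_sum
  cases h : c.blocks with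
  | nil => rfl
  | cons a t =>
    have ha : 0 < a := c.blocks_pos (by simp [h])
    rw [h] at hs; simp at hs; omega

lemma sum_comp0 {M : Type*} [AddCommMonoid M] (f : List ℕ → M) :
    ∑ c : Composition 0, f c.blocks = f [] := by
  have h1 : ∀ c : Composition 0, c = compNil := fun c =>
    Composition.ext (by rw [comp_blocks_nil c]; rfl)
  have : (univ : Finset (Composition 0)) = {compNil} := by
    ext c; simp [h1 c]
  rw [this, Finset.sum_singleton]
  rfl

lemma blocks_ne_nil {n : ℕ} (c : Composition (n+1)) : c.blocks ≠ [] := by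
  intro h
  have := c.blocks_sum
  simp [h] at this

lemma headI_add_tail_sum {n : ℕ} (c : Composition (n+1)) :
    c.blocks.headI + c.blocks.tail.sum = n+1 := by
  have hs := c.blocks_sum
  cases h : c.blocks with
  | nil => exact absurd h (blocks_ne_nil c)
  | cons a t => rw [h] at hs; simpa using hs

lemma headI_pos {n : ℕ} (c : Composition (n+1)) : 0 < c.blocks.headI := by
  cases h : c.blocks with
  | nil => exact absurd h (blocks_ne_nil c)
  | cons a t => simpa [h] using c.blocks_pos (by simp [h])

lemma headI_cons_tail (l : List ℕ) (h : l ≠ []) : l.headI :: l.tail = l := by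
  cases l with
  | nil => exact absurd rfl h
  | cons a t => rfl

lemma comp_heq {a b : ℕ} (h : a = b) (c : Composition a) (d : Composition b)
    (hb : c.blocks = d.blocks) : HEq c d := by
  subst h
  exact heq_of_eq (Composition.ext hb)

def peelEquiv (n : ℕ) : Composition (n+1) ≃ Σ j : Fin (n+1), Composition j where
  toFun c := ⟨⟨c.blocks.tail.sum, by have := headI_add_tail_sum c; have := headI_pos c; omega⟩,
    ⟨c.blocks.tail, fun hi => c.blocks_pos (List.mem_of_mem_tail hi), rfl⟩⟩
  invFun x := ⟨(n+1-x.1.1) :: x.2.blocks,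
    by
      intro i hi
      rcases List.mem_cons.1 hi with h | h
      · subst h; have := x.1.2; omega
      · exact x.2.blocks_pos h,
    by
      have := x.2.blocks_sum
      have := x.1.2
      simp only [List.sum_cons, this]
      omega⟩
  left_inv c := by
    apply Composition.ext
    simp only
    have h1 := headI_add_tail_sum c
    have h2 : n+1 - c.blocks.tail.sum = c.blocks.headI := by omega
    rw [h2]
    exact headI_cons_tail _ (blocks_ne_nil c)
  right_inv := by
    rintro ⟨⟨j, hj⟩, c⟩
    have hs := c.blocks_sum
    refine Sigma.ext (Fin.ext ?_) (comp_heq ?_ _ _ ?_)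
    · simpa using hs
    · simpa using hs
    · simp

set_option maxHeartbeats 1000000 in
lemma sum_comp_peel {M : Type*} [AddCommMonoid M] (n : ℕ) (f : List ℕ → M) :
    ∑ c : Composition (n+1), f c.blocks
      = ∑ j ∈ Finset.range (n+1), ∑ c : Composition j, f ((n+1-j) :: c.blocks) := by
  have key : ∀ c : Composition (n+1),
      f c.blocks = (fun x : Σ j : Fin (n+1), Composition j =>
        f ((n+1-x.1.1) :: x.2.blocks)) (peelEquiv n c) := by
    intro c
    simp only [peelEquiv, Equiv.coe_fn_mk]
    have h1 := headI_add_tail_sum c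
    have h2 : n+1 - c.blocks.tail.sum = c.blocks.headI := by omega
    rw [h2, headI_cons_tail _ (blocks_ne_nil c)]
  calc ∑ c : Composition (n+1), f c.blocks
      = ∑ c : Composition (n+1), (fun x : Σ j : Fin (n+1), Composition j =>
          f ((n+1-x.1.1) :: x.2.blocks)) (peelEquiv n c) := Finset.sum_congr rfl (fun c _ => key c)
    _ = ∑ x : Σ j : Fin (n+1), Composition j, f ((n+1-x.1.1) :: x.2.blocks) :=
        by exact Equiv.sum_comp (peelEquiv n) fun x => f ((n+1-x.1.1) :: x.2.blocks)
    _ = ∑ j : Fin (n+1), ∑ c : Composition j.1, f ((n+1-j.1) :: c.blocks) := by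
        rw [← Finset.univ_sigma_univ, Finset.sum_sigma]
    _ = ∑ j ∈ Finset.range (n+1), ∑ c : Composition j, f ((n+1-j) :: c.blocks) :=
        Fin.sum_univ_eq_sum_range (fun j => ∑ c : Composition j, f ((n+1-j) :: c.blocks)) _

def Bfn (N : ℕ) : ℕ := ∑ c : Composition N, slidingWeight c.blocks * c.blocks.headI

@[simp] lemma slidingWeight_nil : slidingWeight [] = 1 := rfl
@[simp] lemma slidingWeight_single (m : ℕ) : slidingWeight [m] = 1 := rfl

lemma slidingWeight_cons (m : ℕ) (l : List ℕ) (h : l ≠ []) :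
    slidingWeight (m :: l) = (m + l.headI - 1) * slidingWeight l := by
  cases l with
  | nil => exact absurd rfl h
  | cons a t => simp [slidingWeight]

noncomputable def Sq (n : ℕ) : ℚ := (S n : ℚ)
noncomputable def Bq (n : ℕ) : ℚ := (Bfn n : ℚ)

lemma inner1 (n k : ℕ) (h : k + 1 ≤ n) :
    ∑ c : Composition (k+1), slidingWeight ((n+1-(k+1)) :: c.blocks)
      = (n - (k+1)) * S (k+1) + Bfn (k+1) := by
  have step : ∀ c : Composition (k+1),
      slidingWeight ((n+1-(k+1)) :: c.blocks)
        = (n - (k+1)) * slidingWeight c.blocks + slidingWeight c.blocks * c.blocks.headI := by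
    intro c
    rw [slidingWeight_cons _ _ (blocks_ne_nil c)]
    have h1 := headI_pos c
    have h2 : n + 1 - (k+1) + c.blocks.headI - 1 = (n - (k+1)) + c.blocks.headI := by omega
    rw [h2, add_mul, mul_comm c.blocks.headI]
  rw [Finset.sum_congr rfl (fun c _ => step c), Finset.sum_add_distrib, ← Finset.mul_sum, S, Bfn]

lemma R1 (n : ℕ) : S (n+1) = 1 + ∑ j ∈ Icc 1 n, ((n - j) * S j + Bfn j) := by
  have hr : Finset.range (n+1) = insert 0 (Icc 1 n) := by
    ext x; simp [Nat.lt_succ_iff]; omega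
  rw [S, sum_comp_peel, hr, Finset.sum_insert (by simp)]
  have h0 : ∑ c : Composition 0, slidingWeight ((n+1-0) :: c.blocks) = 1 := by
    rw [sum_comp0 (fun l => slidingWeight ((n+1-0) :: l))]; simp
  have hsum : ∑ j ∈ Icc 1 n, (∑ c : Composition j, slidingWeight ((n+1-j) :: c.blocks))
      = ∑ j ∈ Icc 1 n, ((n - j) * S j + Bfn j) := by
    apply Finset.sum_congr rfl
    intro j hj
    simp only [Finset.mem_Icc] at hj
    obtain ⟨k, rfl⟩ : ∃ k, j = k + 1 := ⟨j - 1, by omega⟩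
    exact inner1 n k hj.2
  rw [h0, hsum]

lemma R2 (n : ℕ) : Bfn (n+1)
    = (n+1) + ∑ j ∈ Icc 1 n, (n+1-j) * ((n - j) * S j + Bfn j) := by
  have hr : Finset.range (n+1) = insert 0 (Icc 1 n) := by
    ext x; simp [Nat.lt_succ_iff]; omega
  rw [Bfn, sum_comp_peel n (fun l => slidingWeight l * l.headI), hr,
    Finset.sum_insert (by simp)]
  have h0 : ∑ c : Composition 0,
      slidingWeight ((n+1-0) :: c.blocks) * ((n+1-0) :: c.blocks).headI = n+1 := by
    rw [sum_comp0 (fun l => slidingWeight ((n+1-0) :: l) * ((n+1-0) :: l).headI)]; simp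
  have hsum : ∑ j ∈ Icc 1 n, (∑ c : Composition j,
        slidingWeight ((n+1-j) :: c.blocks) * ((n+1-j) :: c.blocks).headI)
      = ∑ j ∈ Icc 1 n, (n+1-j) * ((n - j) * S j + Bfn j) := by
    apply Finset.sum_congr rfl
    intro j hj
    simp only [Finset.mem_Icc] at hj
    obtain ⟨k, rfl⟩ : ∃ k, j = k + 1 := ⟨j - 1, by omega⟩
    have hh : ∀ c : Composition (k+1),
        slidingWeight ((n+1-(k+1)) :: c.blocks) * ((n+1-(k+1)) :: c.blocks).headI
          = (n+1-(k+1)) * slidingWeight ((n+1-(k+1)) :: c.blocks) := by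
      intro c; rw [List.headI_cons, mul_comm]
    rw [Finset.sum_congr rfl (fun c _ => hh c), ← Finset.mul_sum, inner1 n k hj.2]
  rw [h0, hsum]

lemma R1q (n : ℕ) : Sq (n+1) = 1 + ∑ j ∈ Icc 1 n, (((n:ℚ) - j) * Sq j + Bq j) := by
  have h := R1 n
  have h2 : (S (n+1) : ℚ) = 1 + ∑ j ∈ Icc 1 n, (((n - j : ℕ) : ℚ) * (S j : ℚ) + (Bfn j : ℚ)) := by
    rw [h]; push_cast; ring
  rw [Sq, h2]
  congr 1
  apply Finset.sum_congr rfl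
  intro j hj
  simp only [Finset.mem_Icc] at hj
  rw [Nat.cast_sub hj.2, Sq, Bq]

lemma R2q (n : ℕ) : Bq (n+1)
    = ((n:ℚ)+1) + ∑ j ∈ Icc 1 n, (((n:ℚ)+1-j) * (((n:ℚ) - j) * Sq j + Bq j)) := by
  have h := R2 n
  have h2 : (Bfn (n+1) : ℚ) = ((n:ℚ)+1) + ∑ j ∈ Icc 1 n,
      (((n+1-j : ℕ) : ℚ) * (((n - j : ℕ) : ℚ) * (S j : ℚ) + (Bfn j : ℚ))) := by
    rw [h]; push_cast; ring
  rw [Bq, h2]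
  congr 1
  apply Finset.sum_congr rfl
  intro j hj
  simp only [Finset.mem_Icc] at hj
  rw [Nat.cast_sub hj.2, Nat.cast_sub (by omega : j ≤ n+1), Sq, Bq]
  push_cast
  ring

lemma E1 (n : ℕ) : Sq (n+2) = Sq (n+1) + Bq (n+1) + ∑ j ∈ Icc 1 n, Sq j := by
  have hA := R1q (n+1)
  have hB := R1q n
  rw [Finset.sum_Icc_succ_top (by omega)] at hA
  push_cast at hA
  have hsplit : ∑ j ∈ Icc 1 n, (((n:ℚ) + 1 - j) * Sq j + Bq j)
      = ∑ j ∈ Icc 1 n, (((n:ℚ) - j) * Sq j + Bq j) + ∑ j ∈ Icc 1 n, Sq j := by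
    rw [← Finset.sum_add_distrib]
    apply Finset.sum_congr rfl
    intro j _; ring
  rw [hsplit] at hA
  linear_combination hA - hB

lemma E2 (n : ℕ) : Bq (n+2) = 2*Sq (n+2) - 1 - ∑ j ∈ Icc 1 n, Bq j := by
  have hA := R2q (n+1)
  have hB := R2q n
  have hC := R1q (n+1)
  rw [Finset.sum_Icc_succ_top (by omega)] at hA hC
  push_cast at hA hC
  have hsplit1 : ∑ j ∈ Icc 1 n, (((n:ℚ) + 1 + 1 - j) * (((n:ℚ) + 1 - j) * Sq j + Bq j))
      = ∑ j ∈ Icc 1 n, (((n:ℚ)+1-j) * (((n:ℚ) - j) * Sq j + Bq j))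
        + 2 * ∑ j ∈ Icc 1 n, (((n:ℚ)+1-j) * Sq j) + ∑ j ∈ Icc 1 n, Bq j := by
    rw [Finset.mul_sum, ← Finset.sum_add_distrib, ← Finset.sum_add_distrib]
    apply Finset.sum_congr rfl
    intro j _; ring
  have hsplit2 : ∑ j ∈ Icc 1 n, (((n:ℚ) + 1 - j) * Sq j + Bq j)
      = ∑ j ∈ Icc 1 n, (((n:ℚ)+1-j) * Sq j) + ∑ j ∈ Icc 1 n, Bq j :=
    Finset.sum_add_distrib
  rw [hsplit2] at hC
  rw [show ((n:ℚ)+1+1) = (n:ℚ)+2 by ring] at hA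
  rw [show (∑ j ∈ Icc 1 n, (((n:ℚ) + 2 - j) * (((n:ℚ) + 1 - j) * Sq j + Bq j)))
      = ∑ j ∈ Icc 1 n, (((n:ℚ) + 1 + 1 - j) * (((n:ℚ) + 1 - j) * Sq j + Bq j)) from
    Finset.sum_congr rfl fun j _ => by ring_nf, hsplit1] at hA
  linear_combination hA - 2*hC - hB

lemma E3 (n : ℕ) : Bq (n+2) = Bq (n+1) + Sq (n+3) - 2*Sq (n+2) := by
  have hA := E1 (n+1)
  have hB := E1 n
  rw [Finset.sum_Icc_succ_top (by omega)] at hA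
  rw [show n+1+2 = n+3 from rfl, show n+1+1 = n+2 from rfl] at hA
  linear_combination hB - hA

lemma E4 (n : ℕ) : Bq (n+1) = 4*Sq (n+3) - 2*Sq (n+2) - Sq (n+4) := by
  have hA := E2 (n+1)
  have hB := E2 n
  have hC := E3 (n+1)
  rw [Finset.sum_Icc_succ_top (by omega)] at hA
  rw [show n+1+2 = n+3 from rfl] at hA
  rw [show n+1+3 = n+4 from rfl, show n+1+2 = n+3 from rfl, show n+1+1 = n+2 from rfl] at hC
  linear_combination hA - hB - hC

lemma REC (n : ℕ) : Sq (n+5) = 5*Sq (n+4) - 7*Sq (n+3) + 4*Sq (n+2) := by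
  have hA := E3 n
  have hB := E4 (n+1)
  have hC := E4 n
  rw [show n+1+4 = n+5 from rfl, show n+1+3 = n+4 from rfl, show n+1+2 = n+3 from rfl,
    show n+1+1 = n+2 from rfl] at hB
  linear_combination hB - hC - hA

lemma Sq1 : Sq 1 = 1 := by have := R1q 0; simpa using this
lemma Bq1 : Bq 1 = 1 := by have := R2q 0; simpa using this
lemma Sq2 : Sq 2 = 2 := by have := E1 0; simp [Sq1, Bq1] at this; linarith
lemma Bq2 : Bq 2 = 3 := by have := E2 0; simp [Sq2] at this; linarith
lemma Sq3 : Sq 3 = 6 := by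
  have := E1 1
  rw [show Icc 1 1 = {1} from Finset.Icc_self 1, Finset.sum_singleton] at this
  rw [this, Sq1, Sq2, Bq2]; norm_num
lemma Bq3 : Bq 3 = 10 := by
  have := E2 1
  rw [show Icc 1 1 = {1} from Finset.Icc_self 1, Finset.sum_singleton] at this
  rw [this, Sq3, Bq1]; norm_num
lemma Sq4 : Sq 4 = 19 := by
  have := E1 2
  rw [show Icc 1 2 = {1, 2} from rfl, Finset.sum_insert (by decide), Finset.sum_singleton] at this
  rw [this, Sq1, Sq2, Sq3, Bq3]; norm_num

/-- As formal power series over ℚ,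
`∑_{N≥1} S(N) xᴺ = x(1−x)³ / (1 − 5x + 7x² − 4x³)`, stated as
`(1 − 5x + 7x² − 4x³) · ∑_{N≥1} S(N) xᴺ = x(1−x)³`. -/
theorem generating_function_rowConvex :
    ((1 : ℚ⟦X⟧) - 5 * X + 7 * X ^ 2 - 4 * X ^ 3) *
        PowerSeries.mk (fun N => if N = 0 then (0 : ℚ) else (S N : ℚ))
      = X * (1 - X) ^ 3 := by
  set f : ℕ → ℚ := fun N => if N = 0 then (0 : ℚ) else (S N : ℚ) with hf
  have h5 : (5 : ℚ⟦X⟧) = C (R := ℚ) 5 := (map_ofNat (C (R := ℚ)) 5).symm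
  have h7 : (7 : ℚ⟦X⟧) = C (R := ℚ) 7 := (map_ofNat (C (R := ℚ)) 7).symm
  have h4 : (4 : ℚ⟦X⟧) = C (R := ℚ) 4 := (map_ofNat (C (R := ℚ)) 4).symm
  have h3 : (3 : ℚ⟦X⟧) = C (R := ℚ) 3 := (map_ofNat (C (R := ℚ)) 3).symm
  have hL : ((1 : ℚ⟦X⟧) - 5 * X + 7 * X ^ 2 - 4 * X ^ 3) * PowerSeries.mk f
      = PowerSeries.mk f - C (R := ℚ) 5 * (PowerSeries.mk f * X^1)
        + C (R := ℚ) 7 * (PowerSeries.mk f * X^2) - C (R := ℚ) 4 * (PowerSeries.mk f * X^3) := by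
    rw [← h5, ← h7, ← h4]; ring
  have hR : ((X : ℚ⟦X⟧) * (1 - X) ^ 3)
      = X^1 - C (R := ℚ) 3 * X^2 + C (R := ℚ) 3 * X^3 - X^4 := by
    rw [← h3]; ring
  rw [hL, hR]
  ext n
  simp only [map_sub, map_add, coeff_C_mul, coeff_mul_X_pow', coeff_X_pow, coeff_mk]
  rcases n with _|_|_|_|_|n
  · norm_num [hf]
  · norm_num [hf]
    have h1 := Sq1
    rw [Sq] at h1
    exact_mod_cast h1
  · norm_num [hf]
    have := Sq2; have := Sq1
    rw [Sq] at *
    push_cast at *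
    linarith
  · norm_num [hf]
    have h1 := Sq1; have h2 := Sq2; have h3 := Sq3
    rw [Sq] at *
    linarith
  · norm_num [hf]
    have h1 := Sq1; have h2 := Sq2; have h3 := Sq3; have h4 := Sq4
    rw [Sq] at *
    linarith
  · simp only [show n+1+1+1+1+1 = n+5 from rfl, PowerSeries.coeff_C]
    have c1 : (1 ≤ n+5) := by omega
    have c2 : (2 ≤ n+5) := by omega
    have c3 : (3 ≤ n+5) := by omega
    have c4 : (4 ≤ n+5) := by omega
    have e1 : n+5-1 = n+4 := rfl
    have e2 : n+5-2 = n+3 := rfl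
    have e3 : n+5-3 = n+2 := rfl
    rw [e1, e2, e3]
    have hne : ∀ m : ℕ, f (m+2) = Sq (m+2) := by
      intro m; simp [hf, Sq]
    rw [show n+5 = n+3+2 from rfl, hne (n+3)]
    rw [show n+3+2 = n+5 from rfl]
    rw [show n+4 = n+2+2 from rfl, hne (n+2)]
    rw [show n+2+2 = n+4 from rfl]
    rw [show n+3 = n+1+2 from rfl, hne (n+1)]
    rw [show n+1+2 = n+3 from rfl]
    rw [hne n]
    have hrec := REC n
    rw [if_pos c1, if_pos c2, if_pos c3, if_neg (show ¬(n+3=0) by omega),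
      if_neg (show ¬(n+2=0) by omega), if_neg (show ¬(n+5=1) by omega),
      if_neg (show ¬(n+5=4) by omega)]
    simp only [ite_self]
    linarith [hrec]
end
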